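/- Let 𝒜 = {x ∈ ℒ : x₂ < 0}, ℐ = {x ∈ ℒ : x₂ = 0}, 𝒞 = {x ∈ ℒ : x₂ > 0} (a flat interface). There exists no choice of parameters (C_{x,j,i}), x ∈ ℐ, satisfying the one-sidedness condition, local energy consistency, and local force consistency, for which Σac(y_F;T) = Σa(y_F;T) holds for all T ∈ 𝒯, all F ∈ ℝ^{2×2}, and all V ∈ 𝒱. -/

import Mathlib

open Real
open scoped BigOperators Classical ENNReal

noncomputable section

namespace AC

/-- The plane `ℝ²` with the Euclidean norm. -/
abbrev E2 := EuclideanSpace ℝ (Fin 2)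

/-- `2 × 2` real matrices. -/
abbrev Mat2 := Matrix (Fin 2) (Fin 2) ℝ

def toE2 (v : Fin 2 → ℝ) : E2 := WithLp.toLp 2 v

/-- The lattice directions `a_j = Q6^(j-1) a_1`, `Q6` the rotation by `π/3`. -/
def avec (j : ℤ) : E2 :=
  toE2 ![Real.cos (((j : ℝ) - 1) * (Real.pi / 3)), Real.sin (((j : ℝ) - 1) * (Real.pi / 3))]

/-- The volume `Ω₀ = √3/2` of a primitive cell. -/
def Om0 : ℝ := Real.sqrt 3 / 2

/-- `𝐚 = (a_1, …, a_6)`. -/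
def aFam : Fin 6 → E2 := fun j => avec ((j : ℕ) + 1)

/-- Matrix-vector multiplication on `E2`. -/
def mvec (F : Mat2) (v : E2) : E2 := toE2 fun i => ∑ k, F i k * v k

/-- `F𝐚 = (F a_1, …, F a_6)`. -/
def Famat (F : Mat2) : Fin 6 → E2 := fun j => mvec F (aFam j)

/-- Lattice coordinates (w.r.t. the basis `a_1, a_2`) of `a_j` (indices mod 6). -/
def ed (j : ℤ) : ℤ × ℤ :=
  match (j % 6).toNat with
  | 1 => (1, 0)
  | 2 => (0, 1)
  | 3 => (-1, 1)
  | 4 => (-1, 0)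
  | 5 => (0, -1)
  | _ => (1, -1)

/-- The lattice point `n₁ a₁ + n₂ a₂`; `ℒ = emb '' (ℤ × ℤ)`. -/
def emb (n : ℤ × ℤ) : E2 := (n.1 : ℝ) • avec 1 + (n.2 : ℝ) • avec 2

/-- Forward finite difference `D_j v(x) = v(x + a_j) - v(x)` in lattice coordinates. -/
def Dd (j : ℤ) (v : ℤ × ℤ → E2) (n : ℤ × ℤ) : E2 := v (n + ed j) - v n

/-- `Dv(x) = (D_1 v(x), …, D_6 v(x))`. -/
def Dfam (y : ℤ × ℤ → E2) (n : ℤ × ℤ) : Fin 6 → E2 := fun j => Dd ((j : ℕ) + 1) y n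

/-- Euclidean dot product. -/
def dotE (v w : E2) : ℝ := ∑ i, v i * w i

/-- Frobenius inner product `A : B`. -/
def frobI (A B : Mat2) : ℝ := ∑ i, ∑ k, A i k * B i k

/-- Frobenius norm. -/
def frobN (A : Mat2) : ℝ := Real.sqrt (∑ i, ∑ k, (A i k) ^ 2)

/-- Outer product `v ⊗ w`. -/
def outer (v w : E2) : Mat2 := fun i k => v i * w k

/-- The element of `(ℝ²)⁶` with `k`-th standard basis vector in slot `j` and `0` elsewhere. -/
def unitv (j : Fin 6) (k : Fin 2) : Fin 6 → E2 := fun i => if i = j then toE2 (Pi.single k 1) else 0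

/-- Partial gradient `∂_j V(g) ∈ ℝ²` of `V` with respect to its `j`-th argument. -/
def pd (V : (Fin 6 → E2) → ℝ) (j : Fin 6) (g : Fin 6 → E2) : E2 :=
  toE2 fun k => deriv (fun t : ℝ => V (g + t • unitv j k)) 0

/-- Second partial derivative `∂_{ij} V(g) ∈ ℝ^{2×2}`. -/
def pd2 (V : (Fin 6 → E2) → ℝ) (i j : Fin 6) (g : Fin 6 → E2) : Mat2 :=
  fun k l => deriv (fun t : ℝ => pd V j (g + t • unitv i k) l) 0

/-- Third partial derivative `∂_{ijk} V(g)`. -/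
def pd3 (V : (Fin 6 → E2) → ℝ) (i j k : Fin 6) (g : Fin 6 → E2) : Fin 2 → Fin 2 → Fin 2 → ℝ :=
  fun p q r => deriv (fun t : ℝ => pd2 V j k (g + t • unitv i p) q r) 0

/-- Operator norm of a matrix viewed as a bilinear form on `ℝ²`. -/
def matOpNorm (A : Mat2) : ℝ :=
  sSup {r : ℝ | ∃ h1 h2 : E2, ‖h1‖ = 1 ∧ ‖h2‖ = 1 ∧ r = ∑ k, ∑ l, A k l * h1 k * h2 l}

/-- Norm of a trilinear form on `ℝ²`. -/
def t3norm (B : Fin 2 → Fin 2 → Fin 2 → ℝ) : ℝ :=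
  sSup {r : ℝ | ∃ h1 h2 h3 : E2, ‖h1‖ = 1 ∧ ‖h2‖ = 1 ∧ ‖h3‖ = 1 ∧
    r = ∑ p, ∑ q, ∑ s, B p q s * h1 p * h2 q * h3 s}

/-- `M₂ = Σ_{i,j} sup_g ‖∂_{ij}V(g)‖`. -/
def M2 (V : (Fin 6 → E2) → ℝ) : ℝ :=
  ∑ i : Fin 6, ∑ j : Fin 6, ⨆ g : Fin 6 → E2, matOpNorm (pd2 V i j g)

/-- `M₃ = Σ_{i,j,k} sup_g ‖∂_{ijk}V(g)‖`. -/
def M3 (V : (Fin 6 → E2) → ℝ) : ℝ :=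
  ∑ i : Fin 6, ∑ j : Fin 6, ∑ k : Fin 6, ⨆ g : Fin 6 → E2, t3norm (pd3 V i j k g)

/-- Finiteness of `M₂`. -/
def M2fin (V : (Fin 6 → E2) → ℝ) : Prop :=
  ∀ i j : Fin 6, BddAbove (Set.range fun g : Fin 6 → E2 => matOpNorm (pd2 V i j g))

/-- Finiteness of `M₃`. -/
def M3fin (V : (Fin 6 → E2) → ℝ) : Prop :=
  ∀ i j k : Fin 6, BddAbove (Set.range fun g : Fin 6 → E2 => t3norm (pd3 V i j k g))

/-- The class `𝒱`: `C³` potentials with the point symmetry `V((-g_{j+3})_j) = V(g)`. -/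
def memV (V : (Fin 6 → E2) → ℝ) : Prop :=
  ContDiff ℝ 3 V ∧ ∀ g : Fin 6 → E2, V (fun j => -g (j + 3)) = V g

/-- Cauchy–Born stored energy `W(F) = V(F𝐚)/Ω₀`. -/
def Wf (V : (Fin 6 → E2) → ℝ) (F : Mat2) : ℝ := V (Famat F) / Om0

/-- `∂W(F) ∈ ℝ^{2×2}`. -/
def DW (V : (Fin 6 → E2) → ℝ) (F : Mat2) : Mat2 :=
  fun i k => deriv (fun t : ℝ => Wf V (F + t • Matrix.single i k 1)) 0

/-- The matrix `G` with `G b₁ = v₁`, `G b₂ = v₂` (for linearly independent `b₁, b₂`). -/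
def solve2 (b1 b2 v1 v2 : E2) : Mat2 := fun i k =>
  (if k = 0 then v1 i * b2 1 - v2 i * b1 1 else v2 i * b1 0 - v1 i * b2 0) /
    (b1 0 * b2 1 - b1 1 * b2 0)

/-- Triangles of the canonical triangulation `𝒯`: `(n, true)` is the upward triangle
with vertices `n, n+a₁, n+a₂`, and `(n, false)` the downward triangle with vertices
`n, n+a₁, n+a₆` (in lattice coordinates). -/
abbrev Tri := (ℤ × ℤ) × Bool

/-- The gradient `∂_T y` of the piecewise affine interpolant of `y` on `T`. -/
def triGrad (y : ℤ × ℤ → E2) (T : Tri) : Mat2 :=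
  if T.2 then solve2 (avec 1) (avec 2) (Dd 1 y T.1) (Dd 2 y T.1)
  else solve2 (avec 1) (avec 6) (Dd 1 y T.1) (Dd 6 y T.1)

/-- The vertices `T ∩ ℒ` of a triangle, in lattice coordinates. -/
def triVerts (T : Tri) : Finset (ℤ × ℤ) :=
  if T.2 then {T.1, T.1 + (1, 0), T.1 + (0, 1)} else {T.1, T.1 + (1, 0), T.1 + (1, -1)}

/-- `x_{T,j}`: the unique lattice point with `x_{T,j}, x_{T,j} + a_{j+1} ∈ T`
(here `j : Fin 6` labels the direction `a_{j+1}`). -/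
def xT (T : Tri) (j : Fin 6) : ℤ × ℤ :=
  T.1 + (if T.2 then
    (match (j : ℕ) with
     | 0 => ((0 : ℤ), (0 : ℤ)) | 1 => (0, 0) | 2 => (1, 0) | 3 => (1, 0) | 4 => (0, 1) | _ => (0, 1))
  else
    (match (j : ℕ) with
     | 0 => ((0 : ℤ), (0 : ℤ)) | 1 => (1, -1) | 2 => (1, -1) | 3 => (1, 0) | 4 => (1, 0) | _ => (0, 0)))

/-- The neighbouring triangle `T_j` of `T` sharing the edge with direction `a_{j+1}`. -/
def nbr (T : Tri) (j : Fin 6) : Tri :=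
  if T.2 then
    (T.1 + (match (j : ℕ) % 3 with | 0 => ((0 : ℤ), (0 : ℤ)) | 1 => (-1, 1) | _ => (0, 1)), false)
  else
    (T.1 + (match (j : ℕ) % 3 with | 0 => ((0 : ℤ), (0 : ℤ)) | 1 => (1, -1) | _ => (0, -1)), true)

/-- The triangle `T_{x,j} = conv{x, x + a_j, x + a_{j+1}}` (index `j` mod 6). -/
def Txj (x : ℤ × ℤ) (j : ℤ) : Tri :=
  match (j % 6).toNat with
  | 1 => (x, true)
  | 2 => (x + (-1, 1), false)
  | 3 => (x + (-1, 0), true)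
  | 4 => (x + (-1, 0), false)
  | 5 => (x + (0, -1), true)
  | _ => (x, false)

/-- The Cauchy–Born site potential `V^c(g) = (Ω₀/6) Σ_j W(∂_{T_{x,j}} y)` as a function
of the six differences `g = Dy(x)`. -/
def Vc (V : (Fin 6 → E2) → ℝ) (g : Fin 6 → E2) : ℝ :=
  Om0 / 6 * ∑ j : Fin 6, Wf V (solve2 (avec ((j : ℕ) + 1)) (avec ((j : ℕ) + 2)) (g j) (g (j + 1)))

/-- The atomistic stress `Σa(y;T)`. -/
def Sa (V : (Fin 6 → E2) → ℝ) (y : ℤ × ℤ → E2) (T : Tri) : Mat2 :=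
  Om0⁻¹ • ∑ j : Fin 6, outer (pd V j (Dfam y (xT T j))) (aFam j)

/-- The continuum stress `Σc¹(y;T) = ∂W(∂_T y)`. -/
def Sc1 (V : (Fin 6 → E2) → ℝ) (y : ℤ × ℤ → E2) (T : Tri) : Mat2 := DW V (triGrad y T)

/-- The continuum stress `Σc²(y;T)`. -/
def Sc2 (V : (Fin 6 → E2) → ℝ) (y : ℤ × ℤ → E2) (T : Tri) : Mat2 :=
  Om0⁻¹ • ∑ j : Fin 6, (2 : ℝ)⁻¹ •
    outer (pd V j (Famat (triGrad y T)) + pd V j (Famat (triGrad y (nbr T j)))) (aFam j)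

/-- The continuum stress `Σc³(y;T)`. -/
def Sc3 (V : (Fin 6 → E2) → ℝ) (y : ℤ × ℤ → E2) (T : Tri) : Mat2 :=
  Om0⁻¹ • ∑ j : Fin 6, outer (pd (Vc V) j (Dfam y (xT T j))) (aFam j)

/-- The interface region `ℐ` determined by the atomistic region `𝒜`. -/
def interf (A : Set (ℤ × ℤ)) : Set (ℤ × ℤ) :=
  {x | x ∉ A ∧ ∃ j : Fin 6, x + ed ((j : ℕ) + 1) ∈ A}

/-- The continuum region `𝒞 = ℒ ∖ (𝒜 ∪ ℐ)`. -/
def contR (A : Set (ℤ × ℤ)) : Set (ℤ × ℤ) := {x | x ∉ A ∧ x ∉ interf A}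

/-- The reconstructed interface potential `V^i(g) = V((Σ_i C_{j,i} g_i)_j)`. -/
def Vi (V : (Fin 6 → E2) → ℝ) (Cp : Fin 6 → Fin 6 → ℝ) (g : Fin 6 → E2) : ℝ :=
  V fun j => ∑ i : Fin 6, Cp j i • g i

/-- The hybrid site potential `V^ac_x`. -/
def Vac (V : (Fin 6 → E2) → ℝ) (C : ℤ × ℤ → Fin 6 → Fin 6 → ℝ) (A : Set (ℤ × ℤ))
    (x : ℤ × ℤ) : (Fin 6 → E2) → ℝ :=
  if x ∈ A then V else if x ∈ interf A then Vi V (C x) else Vc V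

/-- First variation `⟨δE_a(y), u⟩` of the atomistic energy. -/
def dEa (V : (Fin 6 → E2) → ℝ) (y u : ℤ × ℤ → E2) : ℝ :=
  ∑ᶠ n : ℤ × ℤ, ∑ j : Fin 6, dotE (pd V j (Dfam y n)) (Dfam u n j)

/-- First variation `⟨δE_c(y), u⟩` of the Cauchy–Born energy. -/
def dEc (V : (Fin 6 → E2) → ℝ) (y u : ℤ × ℤ → E2) : ℝ :=
  ∑ᶠ T : Tri, Om0 / 2 * frobI (DW V (triGrad y T)) (triGrad u T)

/-- First variation `⟨δE_ac(y), u⟩` of the a/c coupling energy. -/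
def dEac (V : (Fin 6 → E2) → ℝ) (C : ℤ × ℤ → Fin 6 → Fin 6 → ℝ) (A : Set (ℤ × ℤ))
    (y u : ℤ × ℤ → E2) : ℝ :=
  ∑ᶠ n : ℤ × ℤ, ∑ i : Fin 6, dotE (pd (Vac V C A n) i (Dfam y n)) (Dfam u n i)

/-- The a/c stress `Σac(y;T)`. -/
def Sac (V : (Fin 6 → E2) → ℝ) (C : ℤ × ℤ → Fin 6 → Fin 6 → ℝ) (A : Set (ℤ × ℤ))
    (y : ℤ × ℤ → E2) (T : Tri) : Mat2 :=
  Om0⁻¹ • ∑ j : Fin 6, outer (pd (Vac V C A (xT T j)) j (Dfam y (xT T j))) (aFam j)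

/-- `u ∈ 𝒰₀`: finitely supported displacement. -/
def FinSupp (u : ℤ × ℤ → E2) : Prop := (Function.support u).Finite

/-- `y ∈ 𝒴₀`: deformation with `y - id` finitely supported. -/
def inY0 (y : ℤ × ℤ → E2) : Prop := (Function.support fun n => y n - emb n).Finite

/-- The homogeneous deformation `y_F(x) = Fx`. -/
def yhom (F : Mat2) : ℤ × ℤ → E2 := fun n => mvec F (emb n)

/-- One-sidedness: `C_{j,i} = 0` unless `i ∈ {j-1, j, j+1}` (mod 6). -/
def oneSided (Cp : Fin 6 → Fin 6 → ℝ) : Prop :=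
  ∀ j i : Fin 6, i ≠ j - 1 → i ≠ j → i ≠ j + 1 → Cp j i = 0

/-- Local energy consistency: `C_{j,j-1} = C_{j,j+1} = 1 - C_{j,j}`. -/
def eCons (Cp : Fin 6 → Fin 6 → ℝ) : Prop :=
  ∀ j : Fin 6, Cp j (j - 1) = 1 - Cp j j ∧ Cp j (j + 1) = 1 - Cp j j

/-- The coefficients corresponding to the atomistic site potential (`C_{x,j} = 1`). -/
def atomC : Fin 6 → Fin 6 → ℝ := fun j i => if i = j then 1 else 0

/-- The coefficients corresponding to the Cauchy–Born site potential (`C_{x,j} = 2/3`). -/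
def cbC : Fin 6 → Fin 6 → ℝ := fun j i =>
  if i = j then 2 / 3 else if i = j - 1 ∨ i = j + 1 then 1 / 3 else 0

/-- The negative force `-f_ac(x; y_F) = Σ_{j,i} (C_{x-a_i,j,i} - C_{x,j,i}) ∂_j V(F𝐚)`. -/
def forceSum (C : ℤ × ℤ → Fin 6 → Fin 6 → ℝ) (V : (Fin 6 → E2) → ℝ) (F : Mat2)
    (x : ℤ × ℤ) : E2 :=
  ∑ j : Fin 6, ∑ i : Fin 6, (C (x - ed ((i : ℕ) + 1)) j i - C x j i) • pd V j (Famat F)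

/-- The force consistency condition (5.2) on the coefficients. -/
def fCons (C : ℤ × ℤ → Fin 6 → Fin 6 → ℝ) : Prop :=
  ∀ j : Fin 6, (j : ℕ) < 3 → ∀ x : ℤ × ℤ,
    ∑ i : Fin 6, (C (x - ed ((i : ℕ) + 1)) j i - C (x - ed ((i : ℕ) + 1)) (j + 3) i
      - C x j i + C x (j + 3) i) = 0

/-- `|D²y(x)| = max_{i,j} |D_i D_j y(x)|`. -/
def D2n (y : ℤ × ℤ → E2) (n : ℤ × ℤ) : ℝ :=
  ⨆ i : Fin 6, ⨆ j : Fin 6, ‖Dd ((i : ℕ) + 1) (Dd ((j : ℕ) + 1) y) n‖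

/-- `|D³y(x)| = max_{i,j,k} |D_i D_j D_k y(x)|`. -/
def D3n (y : ℤ × ℤ → E2) (n : ℤ × ℤ) : ℝ :=
  ⨆ i : Fin 6, ⨆ j : Fin 6, ⨆ k : Fin 6,
    ‖Dd ((i : ℕ) + 1) (Dd ((j : ℕ) + 1) (Dd ((k : ℕ) + 1) y)) n‖

/-- `ℓ^p` norm of a lattice function over a subset `S ⊆ ℒ`. -/
def lpNormS (p : ℝ≥0∞) (f : ℤ × ℤ → ℝ) (S : Set (ℤ × ℤ)) : ℝ :=
  if p = ⊤ then ⨆ x : S, |f x| else (∑ᶠ x ∈ S, |f x| ^ p.toReal) ^ (1 / p.toReal)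

/-- `‖∂u‖_{L^q}` for the piecewise affine interpolant. -/
def gradLp (q : ℝ≥0∞) (u : ℤ × ℤ → E2) : ℝ :=
  if q = ⊤ then ⨆ T : Tri, frobN (triGrad u T)
  else (∑ᶠ T : Tri, Om0 / 2 * frobN (triGrad u T) ^ q.toReal) ^ (1 / q.toReal)

/-- `𝒯_𝒜`: triangles with `T ∩ (ℐ ∪ 𝒞) = ∅`. -/
def TA (A : Set (ℤ × ℤ)) : Set Tri := {T | ∀ n ∈ triVerts T, n ∉ interf A ∧ n ∉ contR A}

/-- `𝒯_𝒞`: triangles with `T ∩ (ℐ ∪ 𝒜) = ∅`. -/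
def TC (A : Set (ℤ × ℤ)) : Set Tri := {T | ∀ n ∈ triVerts T, n ∉ interf A ∧ n ∉ A}

/-- `𝒯_ℐ = 𝒯 ∖ (𝒯_𝒜 ∪ 𝒯_𝒞)`. -/
def TI (A : Set (ℤ × ℤ)) : Set Tri := {T | T ∉ TA A ∧ T ∉ TC A}

/-- The midpoint of the edge `(x, x + a_j)`. -/
def edgeMid (x : ℤ × ℤ) (j : ℤ) : E2 := emb x + (2 : ℝ)⁻¹ • avec j

/-- The edge `(x, x+a_j)` belongs to `𝔉_𝒜` (it lies in a triangle of `𝒯_𝒜`). -/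
def edgeInA (A : Set (ℤ × ℤ)) (x : ℤ × ℤ) (j : ℤ) : Prop :=
  Txj x j ∈ TA A ∨ Txj x (j - 1) ∈ TA A

/-- The edge `(x, x+a_j)` belongs to `𝔉_𝒞`. -/
def edgeInC (A : Set (ℤ × ℤ)) (x : ℤ × ℤ) (j : ℤ) : Prop :=
  Txj x j ∈ TC A ∨ Txj x (j - 1) ∈ TC A

/-- Rotation by `π/2`. -/
def Jmat : Mat2 := !![0, -1; 1, 0]

/-- Midpoint continuity of a piecewise affine field: membership in `N1(𝒯)²`. -/
def midCont (ψ : Tri → E2 → E2) : Prop :=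
  ∀ (x : ℤ × ℤ) (j : ℤ), ψ (Txj x j) (edgeMid x j) = ψ (Txj x (j - 1)) (edgeMid x j)

/-- `ψ` is piecewise affine with Jacobian `G T` on each triangle `T`. -/
def affWith (ψ : Tri → E2 → E2) (G : Tri → Mat2) : Prop :=
  ∀ (T : Tri) (z w : E2), ψ T z - ψ T w = mvec (G T) (z - w)

/-- Assumption 4.1: every interface atom has exactly two interface neighbours and
at least one continuum neighbour. -/
def InterfaceOK (A : Set (ℤ × ℤ)) : Prop :=
  ∀ x ∈ interf A,
    ({j : Fin 6 | x + ed ((j : ℕ) + 1) ∈ interf A}).ncard = 2 ∧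
    ∃ j : Fin 6, x + ed ((j : ℕ) + 1) ∈ contR A

/-- The patch test: local energy consistency and local force consistency for all `V ∈ 𝒱`. -/
def PatchTest (C : ℤ × ℤ → Fin 6 → Fin 6 → ℝ) (A : Set (ℤ × ℤ)) : Prop :=
  (∀ V, memV V → ∀ F : Mat2, ∀ x ∈ interf A, Vi V (C x) (Famat F) = V (Famat F)) ∧
  (∀ V, memV V → ∀ F : Mat2, ∀ u, FinSupp u → dEac V C A (yhom F) u = 0)

/-- The closed triangle `T ⊆ ℝ²`. -/
def triSet (T : Tri) : Set E2 :=
  convexHull ℝ {emb T.1, emb (T.1 + (1, 0)), emb (T.1 + (if T.2 then ((0 : ℤ), (1 : ℤ)) else (1, -1)))}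

/-- The closed edge `[x, x + a_j] ⊆ ℝ²`. -/
def edgeSeg (x : ℤ × ℤ) (j : ℤ) : Set E2 := segment ℝ (emb x) (emb (x + ed j))

/-- The atomistic region of the flat interface: `{x ∈ ℒ : x₂ < 0}`. -/
def flatA : Set (ℤ × ℤ) := {n | emb n 1 < 0}

/-- The extended interface region `ℐ^ext = {x ∈ ℒ : dist(x, ℐ) ≤ 1}`. -/
def Iext (A : Set (ℤ × ℤ)) : Set (ℤ × ℤ) := {x | ∃ z ∈ interf A, ‖emb x - emb z‖ ≤ 1}

/-- Embedding `Fin 3 → Fin 6`. -/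
def jlift (j : Fin 3) : Fin 6 := ⟨(j : ℕ), by omega⟩


/-! ### Auxiliary development for `correctors_necessary` -/

section CorrectorsAux

lemma s3_pos : (0:ℝ) < Real.sqrt 3 := Real.sqrt_pos.2 (by norm_num)

lemma Om0_ne : (Om0 : ℝ) ≠ 0 := by unfold Om0; positivity

lemma av10 : avec 1 0 = 1 := by
  show Real.cos ((((1:ℤ):ℝ) - 1) * (π/3)) = 1; norm_num
lemma av11 : avec 1 1 = 0 := by
  show Real.sin ((((1:ℤ):ℝ) - 1) * (π/3)) = 0; norm_num
lemma av20 : avec 2 0 = 1/2 := by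
  show Real.cos ((((2:ℤ):ℝ) - 1) * (π/3)) = 1/2
  rw [show (((2:ℤ):ℝ) - 1) * (π/3) = π/3 by push_cast; ring, Real.cos_pi_div_three]
lemma av21 : avec 2 1 = Real.sqrt 3/2 := by
  show Real.sin ((((2:ℤ):ℝ) - 1) * (π/3)) = _
  rw [show (((2:ℤ):ℝ) - 1) * (π/3) = π/3 by push_cast; ring, Real.sin_pi_div_three]
lemma av30 : avec 3 0 = -(1/2) := by
  show Real.cos ((((3:ℤ):ℝ) - 1) * (π/3)) = -(1/2)
  rw [show (((3:ℤ):ℝ) - 1) * (π/3) = π - π/3 by push_cast; ring, Real.cos_pi_sub,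
    Real.cos_pi_div_three]
lemma av31 : avec 3 1 = Real.sqrt 3/2 := by
  show Real.sin ((((3:ℤ):ℝ) - 1) * (π/3)) = _
  rw [show (((3:ℤ):ℝ) - 1) * (π/3) = π - π/3 by push_cast; ring, Real.sin_pi_sub,
    Real.sin_pi_div_three]
lemma av40 : avec 4 0 = -1 := by
  show Real.cos ((((4:ℤ):ℝ) - 1) * (π/3)) = -1
  rw [show (((4:ℤ):ℝ) - 1) * (π/3) = π by push_cast; ring, Real.cos_pi]
lemma av41 : avec 4 1 = 0 := by
  show Real.sin ((((4:ℤ):ℝ) - 1) * (π/3)) = 0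
  rw [show (((4:ℤ):ℝ) - 1) * (π/3) = π by push_cast; ring, Real.sin_pi]
lemma av50 : avec 5 0 = -(1/2) := by
  show Real.cos ((((5:ℤ):ℝ) - 1) * (π/3)) = -(1/2)
  rw [show (((5:ℤ):ℝ) - 1) * (π/3) = π/3 + π by push_cast; ring, Real.cos_add_pi,
    Real.cos_pi_div_three]
lemma av51 : avec 5 1 = -(Real.sqrt 3/2) := by
  show Real.sin ((((5:ℤ):ℝ) - 1) * (π/3)) = _
  rw [show (((5:ℤ):ℝ) - 1) * (π/3) = π/3 + π by push_cast; ring, Real.sin_add_pi,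
    Real.sin_pi_div_three]
lemma av60 : avec 6 0 = 1/2 := by
  show Real.cos ((((6:ℤ):ℝ) - 1) * (π/3)) = 1/2
  rw [show (((6:ℤ):ℝ) - 1) * (π/3) = 2*π - π/3 by push_cast; ring, Real.cos_two_pi_sub,
    Real.cos_pi_div_three]
lemma av61 : avec 6 1 = -(Real.sqrt 3/2) := by
  show Real.sin ((((6:ℤ):ℝ) - 1) * (π/3)) = _
  rw [show (((6:ℤ):ℝ) - 1) * (π/3) = 2*π - π/3 by push_cast; ring, Real.sin_two_pi_sub,
    Real.sin_pi_div_three]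
lemma av70 : avec 7 0 = 1 := by
  show Real.cos ((((7:ℤ):ℝ) - 1) * (π/3)) = 1
  rw [show (((7:ℤ):ℝ) - 1) * (π/3) = 2*π by push_cast; ring, Real.cos_two_pi]
lemma av71 : avec 7 1 = 0 := by
  show Real.sin ((((7:ℤ):ℝ) - 1) * (π/3)) = 0
  rw [show (((7:ℤ):ℝ) - 1) * (π/3) = 2*π by push_cast; ring, Real.sin_two_pi]

lemma aF0 : aFam 0 = avec 1 := rfl
lemma aF1 : aFam 1 = avec 2 := rfl
lemma aF2 : aFam 2 = avec 3 := rfl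
lemma aF3 : aFam 3 = avec 4 := rfl
lemma aF4 : aFam 4 = avec 5 := rfl
lemma aF5 : aFam 5 = avec 6 := rfl

lemma emb_snd (n : ℤ × ℤ) : emb n 1 = (n.2 : ℝ) * (Real.sqrt 3 / 2) := by
  unfold emb
  have h : (((n.1 : ℝ) • avec 1 + (n.2:ℝ) • avec 2) : E2) 1
      = (n.1:ℝ) * avec 1 1 + (n.2:ℝ) * avec 2 1 := rfl
  rw [h, av11, av21]; ring

lemma mem_flatA (n : ℤ × ℤ) : n ∈ flatA ↔ n.2 < 0 := by
  show emb n 1 < 0 ↔ _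
  rw [emb_snd]
  constructor
  · intro h
    by_contra hc
    push_neg at hc
    nlinarith [Real.sqrt_nonneg 3, (by exact_mod_cast hc : (0:ℝ) ≤ (n.2:ℝ))]
  · intro h
    have h2 : (n.2 : ℝ) < 0 := by exact_mod_cast h
    nlinarith [s3_pos]

/-- the linear test potential -/
def VL : (Fin 6 → E2) → ℝ := fun g => g 0 0 - g 3 0
/-- the quadratic test potential -/
def VQ : (Fin 6 → E2) → ℝ := fun g => (g 0 1)^2 + (g 3 1)^2

lemma contDiff_eval (i : Fin 6) (k : Fin 2) : ContDiff ℝ 3 (fun g : Fin 6 → E2 => g i k) :=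
  ((EuclideanSpace.proj (𝕜 := ℝ) k).comp (ContinuousLinearMap.proj (R := ℝ) (φ := fun _ : Fin 6 => E2) i)).contDiff

lemma memV_VL : memV VL := by
  refine ⟨(contDiff_eval 0 0).sub (contDiff_eval 3 0), fun g => ?_⟩
  show (-(g (0+3))) 0 - (-(g (3+3))) 0 = g 0 0 - g 3 0
  rw [show ((0:Fin 6)+3) = 3 by decide, show ((3:Fin 6)+3) = 0 by decide]
  show -(g 3 0) - -(g 0 0) = _
  ring

lemma memV_VQ : memV VQ := by
  refine ⟨((contDiff_eval 0 1).pow 2).add ((contDiff_eval 3 1).pow 2), fun g => ?_⟩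
  show ((-(g (0+3))) 1)^2 + ((-(g (3+3))) 1)^2 = (g 0 1)^2 + (g 3 1)^2
  rw [show ((0:Fin 6)+3) = 3 by decide, show ((3:Fin 6)+3) = 0 by decide]
  show (-(g 3 1))^2 + (-(g 0 1))^2 = _
  ring

lemma deriv_affine (a c : ℝ) : deriv (fun t : ℝ => a + t * c) 0 = c := by
  have h : HasDerivAt (fun t : ℝ => a + t * c) c 0 := by
    simpa using ((hasDerivAt_id (0:ℝ)).mul_const c).const_add a
  exact h.deriv

lemma pd0_of_affine (V : (Fin 6 → E2) → ℝ) (j : Fin 6) (g : Fin 6 → E2) (a c : ℝ)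
    (h : ∀ t : ℝ, V (g + t • unitv j 0) = a + t * c) : pd V j g 0 = c := by
  show deriv (fun t : ℝ => V (g + t • unitv j 0)) 0 = c
  rw [show (fun t : ℝ => V (g + t • unitv j 0)) = fun t => a + t * c from funext h]
  exact deriv_affine a c

lemma add_smul_app (g : Fin 6 → E2) (t : ℝ) (u : Fin 6 → E2) (m : Fin 6) (l : Fin 2) :
    (g + t • u) m l = g m l + t * u m l := rfl

lemma smul_app (c : ℝ) (v : E2) (l : Fin 2) : (c • v) l = c * v l := rfl

lemma unitv_app (j : Fin 6) (k : Fin 2) (m : Fin 6) (l : Fin 2) :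
    unitv j k m l = if m = j ∧ l = k then 1 else 0 := by
  unfold unitv toE2
  by_cases h : m = j <;> simp [h, Pi.single_apply]

lemma pd_VL (j : Fin 6) (g : Fin 6 → E2) :
    pd VL j g 0 = (if j = 0 then 1 else 0) - (if j = 3 then 1 else 0) := by
  apply pd0_of_affine VL j g (g 0 0 - g 3 0)
  intro t
  show (g + t • unitv j 0) 0 0 - (g + t • unitv j 0) 3 0 = _
  rw [add_smul_app, add_smul_app, unitv_app, unitv_app]
  by_cases h0 : j = 0 <;> by_cases h3 : j = 3 <;>
    simp [h0, h3, eq_comm] <;> ring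

lemma pd_Vi (Cp : Fin 6 → Fin 6 → ℝ) (i : Fin 6) (g : Fin 6 → E2) :
    pd (Vi VL Cp) i g 0 = Cp 0 i - Cp 3 i := by
  apply pd0_of_affine _ _ _ ((∑ m, Cp 0 m * g m 0) - (∑ m, Cp 3 m * g m 0))
  intro t
  show (∑ m, Cp 0 m • (g + t • unitv i 0) m) 0 - (∑ m, Cp 3 m • (g + t • unitv i 0) m) 0 = _
  rw [WithLp.ofLp_sum, WithLp.ofLp_sum, Finset.sum_apply, Finset.sum_apply]
  simp only [smul_app, add_smul_app, unitv_app]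
  rw [Fin.sum_univ_six, Fin.sum_univ_six, Fin.sum_univ_six, Fin.sum_univ_six]
  fin_cases i <;> (simp (config := { decide := true }); try ring)

lemma solve2_00 (b1 b2 v1 v2 : E2) : (solve2 b1 b2 v1 v2) 0 0
    = (v1 0 * b2 1 - v2 0 * b1 1) / (b1 0 * b2 1 - b1 1 * b2 0) := by
  simp [solve2]

lemma Wf_VL (F : Mat2) : Wf VL F = 2 * F 0 0 / Om0 := by
  unfold Wf
  have h : VL (Famat F) = 2 * F 0 0 := by
    show (∑ k, F 0 k * aFam 0 k) - (∑ k, F 0 k * aFam 3 k) = 2 * F 0 0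
    rw [Fin.sum_univ_two, Fin.sum_univ_two, aF0, aF3, av10, av11, av40, av41]
    ring
  rw [h]

lemma Vc_VL (g : Fin 6 → E2) :
    Vc VL g = (2 * g 0 0 + g 1 0 - g 2 0 - 2 * g 3 0 - g 4 0 + g 5 0) / 3 := by
  unfold Vc
  rw [Fin.sum_univ_six]
  rw [show ((((0:Fin 6):ℕ):ℤ) + 1) = 1 from rfl, show ((((0:Fin 6):ℕ):ℤ) + 2) = 2 from rfl,
    show ((((1:Fin 6):ℕ):ℤ) + 1) = 2 from rfl, show ((((1:Fin 6):ℕ):ℤ) + 2) = 3 from rfl,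
    show ((((2:Fin 6):ℕ):ℤ) + 1) = 3 from rfl, show ((((2:Fin 6):ℕ):ℤ) + 2) = 4 from rfl,
    show ((((3:Fin 6):ℕ):ℤ) + 1) = 4 from rfl, show ((((3:Fin 6):ℕ):ℤ) + 2) = 5 from rfl,
    show ((((4:Fin 6):ℕ):ℤ) + 1) = 5 from rfl, show ((((4:Fin 6):ℕ):ℤ) + 2) = 6 from rfl,
    show ((((5:Fin 6):ℕ):ℤ) + 1) = 6 from rfl, show ((((5:Fin 6):ℕ):ℤ) + 2) = 7 from rfl,
    show ((0:Fin 6)+1) = 1 from rfl, show ((1:Fin 6)+1) = 2 from rfl,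
    show ((2:Fin 6)+1) = 3 from rfl, show ((3:Fin 6)+1) = 4 from rfl,
    show ((4:Fin 6)+1) = 5 from rfl, show ((5:Fin 6)+1) = 0 from rfl]
  rw [Wf_VL, Wf_VL, Wf_VL, Wf_VL, Wf_VL, Wf_VL,
    solve2_00, solve2_00, solve2_00, solve2_00, solve2_00, solve2_00]
  rw [av10, av11, av20, av21, av30, av31, av40, av41, av50, av51, av60, av61, av70, av71]
  have h3 : Real.sqrt 3 ≠ 0 := ne_of_gt s3_pos
  unfold Om0
  field_simp
  ring

lemma pd_Vc4 (g : Fin 6 → E2) : pd (Vc VL) 4 g 0 = -(1/3) := by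
  apply pd0_of_affine _ _ _ (Vc VL g)
  intro t
  rw [Vc_VL, Vc_VL]
  simp only [add_smul_app, unitv_app]
  simp (config := { decide := true })
  ring

lemma pd_Vc5 (g : Fin 6 → E2) : pd (Vc VL) 5 g 0 = 1/3 := by
  apply pd0_of_affine _ _ _ (Vc VL g)
  intro t
  rw [Vc_VL, Vc_VL]
  simp only [add_smul_app, unitv_app]
  simp (config := { decide := true })
  ring

lemma Famat_one (m : Fin 6) (k : Fin 2) : Famat 1 m k = aFam m k := by
  show (∑ i, (1:Mat2) k i * aFam m i) = aFam m k
  rw [Fin.sum_univ_two]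
  fin_cases k <;> simp [Matrix.one_apply]

lemma Vi_VQ (Cp : Fin 6 → Fin 6 → ℝ) (g : Fin 6 → E2) :
    Vi VQ Cp g = (∑ m, Cp 0 m * g m 1)^2 + (∑ m, Cp 3 m * g m 1)^2 := by
  show ((∑ m, Cp 0 m • g m) 1)^2 + ((∑ m, Cp 3 m • g m) 1)^2 = _
  rw [WithLp.ofLp_sum, WithLp.ofLp_sum, Finset.sum_apply, Finset.sum_apply]
  simp only [smul_app]

lemma Sac_entry (V : (Fin 6 → E2) → ℝ) (C : ℤ × ℤ → Fin 6 → Fin 6 → ℝ)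
    (y : ℤ × ℤ → E2) (T : Tri) (k : Fin 2) :
    Sac V C flatA y T 0 k
      = Om0⁻¹ * ∑ j : Fin 6, pd (Vac V C flatA (xT T j)) j (Dfam y (xT T j)) 0 * aFam j k := by
  show Om0⁻¹ * ((∑ j : Fin 6,
      outer (pd (Vac V C flatA (xT T j)) j (Dfam y (xT T j))) (aFam j)) 0 k) = _
  rw [Matrix.sum_apply]
  rfl

lemma Sa_entry (V : (Fin 6 → E2) → ℝ) (y : ℤ × ℤ → E2) (T : Tri) (k : Fin 2) :
    Sa V y T 0 k = Om0⁻¹ * ∑ j : Fin 6, pd V j (Dfam y (xT T j)) 0 * aFam j k := by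
  show Om0⁻¹ * ((∑ j : Fin 6, outer (pd V j (Dfam y (xT T j))) (aFam j)) 0 k) = _
  rw [Matrix.sum_apply]
  rfl

lemma stress_eq (V : (Fin 6 → E2) → ℝ) (C : ℤ × ℤ → Fin 6 → Fin 6 → ℝ)
    (y : ℤ × ℤ → E2) (T : Tri) (h : Sac V C flatA y T = Sa V y T) (k : Fin 2) :
    ∑ j : Fin 6, pd (Vac V C flatA (xT T j)) j (Dfam y (xT T j)) 0 * aFam j k
      = ∑ j : Fin 6, pd V j (Dfam y (xT T j)) 0 * aFam j k := by
  have h2 := congrFun (congrFun h 0) k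
  rw [Sac_entry, Sa_entry] at h2
  exact mul_left_cancel₀ (inv_ne_zero Om0_ne) h2

end CorrectorsAux

section CorrectorsAux2

lemma cancel3 {X Y : ℝ} (h : X * (Real.sqrt 3/2) = Y * (Real.sqrt 3/2)) : X = Y := by
  have hne : Real.sqrt 3/2 ≠ 0 := by positivity
  have h2 : (X - Y) * (Real.sqrt 3/2) = 0 := by linear_combination h
  rcases mul_eq_zero.1 h2 with h3 | h3
  · linarith
  · exact absurd h3 hne

lemma pd_VL0 (g : Fin 6 → E2) : pd VL 0 g 0 = 1 := by
  rw [pd_VL]; simp (config := { decide := true })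
lemma pd_VL1 (g : Fin 6 → E2) : pd VL 1 g 0 = 0 := by
  rw [pd_VL]; simp (config := { decide := true })
lemma pd_VL2 (g : Fin 6 → E2) : pd VL 2 g 0 = 0 := by
  rw [pd_VL]; simp (config := { decide := true })
lemma pd_VL3 (g : Fin 6 → E2) : pd VL 3 g 0 = -1 := by
  rw [pd_VL]; simp (config := { decide := true })
lemma pd_VL4 (g : Fin 6 → E2) : pd VL 4 g 0 = 0 := by
  rw [pd_VL]; simp (config := { decide := true })
lemma pd_VL5 (g : Fin 6 → E2) : pd VL 5 g 0 = 0 := by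
  rw [pd_VL]; simp (config := { decide := true })

end CorrectorsAux2
end AC
set_option maxHeartbeats 2000000 in
open AC in
/-- correctors are necessary — no patch test consistent choice of
parameters makes the a/c stress coincide with the atomistic stress under all
homogeneous deformations, for the flat interface (Remark 6.1). -/
theorem correctors_necessary :
    ¬ ∃ C : ℤ × ℤ → Fin 6 → Fin 6 → ℝ,
        (∀ x ∈ interf flatA, oneSided (C x)) ∧
        (∀ V : (Fin 6 → E2) → ℝ, memV V → ∀ F : Mat2, ∀ x ∈ interf flatA,
          Vi V (C x) (Famat F) = V (Famat F)) ∧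
        (∀ V : (Fin 6 → E2) → ℝ, memV V → ∀ F : Mat2, ∀ u : ℤ × ℤ → E2, FinSupp u →
          dEac V C flatA (yhom F) u = 0) ∧
        (∀ V : (Fin 6 → E2) → ℝ, memV V → ∀ F : Mat2, ∀ T : Tri,
          Sac V C flatA (yhom F) T = Sa V (yhom F) T) := by
  rintro ⟨C, hOS, hE, -, hS⟩
  -- membership facts for the flat interface
  have hA0 : ((0,-1) : ℤ×ℤ) ∈ flatA := (mem_flatA _).2 (by norm_num)
  have hA1 : ((1,-1) : ℤ×ℤ) ∈ flatA := (mem_flatA _).2 (by norm_num)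
  have hm00 : ((0,0) : ℤ×ℤ) ∈ interf flatA := by
    refine ⟨by rw [mem_flatA]; norm_num, ⟨4, ?_⟩⟩
    exact (mem_flatA _).2 (by decide)
  have hm10 : ((1,0) : ℤ×ℤ) ∈ interf flatA := by
    refine ⟨by rw [mem_flatA]; norm_num, ⟨4, ?_⟩⟩
    exact (mem_flatA _).2 (by decide)
  have hC1 : ((0,1) : ℤ×ℤ) ∉ flatA := by rw [mem_flatA]; norm_num
  have hC2 : ((0,1) : ℤ×ℤ) ∉ interf flatA := by
    rintro ⟨-, j, hj⟩
    rw [mem_flatA] at hj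
    fin_cases j <;> exact absurd hj (by decide)
  -- rewriting the hybrid potential at the relevant sites
  have vA : ∀ (V : (Fin 6 → E2) → ℝ) (x : ℤ×ℤ), x ∈ flatA → Vac V C flatA x = V :=
    fun V x hx => by unfold Vac; rw [if_pos hx]
  have vI00 : ∀ V : (Fin 6 → E2) → ℝ, Vac V C flatA (0,0) = Vi V (C (0,0)) := fun V => by
    unfold Vac; rw [if_neg hm00.1, if_pos hm00]
  have vI10 : ∀ V : (Fin 6 → E2) → ℝ, Vac V C flatA (1,0) = Vi V (C (1,0)) := fun V => by
    unfold Vac; rw [if_neg hm10.1, if_pos hm10]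
  have vC01 : ∀ V : (Fin 6 → E2) → ℝ, Vac V C flatA (0,1) = Vc V := fun V => by
    unfold Vac; rw [if_neg hC1, if_neg hC2]
  -- one-sidedness zeros
  have os0 := hOS _ hm00
  have os1 := hOS _ hm10
  have z1 : C (0,0) 0 4 = 0 := os0 0 4 (by decide) (by decide) (by decide)
  have z2 : C (0,0) 3 5 = 0 := os0 3 5 (by decide) (by decide) (by decide)
  have z5 : C (1,0) 0 2 = 0 := os1 0 2 (by decide) (by decide) (by decide)
  have z7 : C (1,0) 0 4 = 0 := os1 0 4 (by decide) (by decide) (by decide)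
  have z9 : C (1,0) 3 1 = 0 := os1 3 1 (by decide) (by decide) (by decide)
  have z10 : C (1,0) 3 5 = 0 := os1 3 5 (by decide) (by decide) (by decide)
  -- triangle T1 = ((0,-1), true)
  have hT1 := stress_eq VL C (yhom 1) ((0,-1), true) (hS VL memV_VL 1 ((0,-1), true))
  have h10 := hT1 0
  have h11 := hT1 1
  simp only [Fin.sum_univ_six] at h10 h11
  rw [show xT ((0,-1), true) 0 = ((0,-1):ℤ×ℤ) from by decide,
      show xT ((0,-1), true) 1 = ((0,-1):ℤ×ℤ) from by decide,
      show xT ((0,-1), true) 2 = ((1,-1):ℤ×ℤ) from by decide,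
      show xT ((0,-1), true) 3 = ((1,-1):ℤ×ℤ) from by decide,
      show xT ((0,-1), true) 4 = ((0,0):ℤ×ℤ) from by decide,
      show xT ((0,-1), true) 5 = ((0,0):ℤ×ℤ) from by decide] at h10 h11
  rw [vA VL _ hA0, vA VL _ hA1, vI00 VL] at h10 h11
  simp only [pd_VL0, pd_VL1, pd_VL2, pd_VL3, pd_VL4, pd_VL5, pd_Vi, pd_Vc4, pd_Vc5,
    aF0, aF1, aF2, aF3, aF4, aF5, av10, av11, av20, av21, av30, av31, av40, av41,
    av50, av51, av60, av61] at h10 h11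
  -- triangle T2 = ((0,0), false)
  have hT2 := stress_eq VL C (yhom 1) ((0,0), false) (hS VL memV_VL 1 ((0,0), false))
  have h20 := hT2 0
  have h21 := hT2 1
  simp only [Fin.sum_univ_six] at h20 h21
  rw [show xT ((0,0), false) 0 = ((0,0):ℤ×ℤ) from by decide,
      show xT ((0,0), false) 1 = ((1,-1):ℤ×ℤ) from by decide,
      show xT ((0,0), false) 2 = ((1,-1):ℤ×ℤ) from by decide,
      show xT ((0,0), false) 3 = ((1,0):ℤ×ℤ) from by decide,
      show xT ((0,0), false) 4 = ((1,0):ℤ×ℤ) from by decide,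
      show xT ((0,0), false) 5 = ((0,0):ℤ×ℤ) from by decide] at h20 h21
  rw [vA VL _ hA1, vI00 VL, vI10 VL] at h20 h21
  simp only [pd_VL0, pd_VL1, pd_VL2, pd_VL3, pd_VL4, pd_VL5, pd_Vi, pd_Vc4, pd_Vc5,
    aF0, aF1, aF2, aF3, aF4, aF5, av10, av11, av20, av21, av30, av31, av40, av41,
    av50, av51, av60, av61] at h20 h21
  -- triangle T3 = ((0,0), true)
  have hT3 := stress_eq VL C (yhom 1) ((0,0), true) (hS VL memV_VL 1 ((0,0), true))
  have h30 := hT3 0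
  have h31 := hT3 1
  simp only [Fin.sum_univ_six] at h30 h31
  rw [show xT ((0,0), true) 0 = ((0,0):ℤ×ℤ) from by decide,
      show xT ((0,0), true) 1 = ((0,0):ℤ×ℤ) from by decide,
      show xT ((0,0), true) 2 = ((1,0):ℤ×ℤ) from by decide,
      show xT ((0,0), true) 3 = ((1,0):ℤ×ℤ) from by decide,
      show xT ((0,0), true) 4 = ((0,1):ℤ×ℤ) from by decide,
      show xT ((0,0), true) 5 = ((0,1):ℤ×ℤ) from by decide] at h30 h31
  rw [vI00 VL, vI10 VL, vC01 VL] at h30 h31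
  simp only [pd_VL0, pd_VL1, pd_VL2, pd_VL3, pd_VL4, pd_VL5, pd_Vi, pd_Vc4, pd_Vc5,
    aF0, aF1, aF2, aF3, aF4, aF5, av10, av11, av20, av21, av30, av31, av40, av41,
    av50, av51, av60, av61] at h30 h31
  -- clean scalar equations
  have c1 : C (0,0) 0 5 - C (0,0) 3 5 = C (0,0) 0 4 - C (0,0) 3 4 := by linear_combination 2 * h10
  have c2 : (C (0,0) 0 4 - C (0,0) 3 4) + (C (0,0) 0 5 - C (0,0) 3 5) = 0 :=
    cancel3 (Y := 0) (by linear_combination -h11)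
  have c3 : (C (0,0) 0 0 - C (0,0) 3 0) - (C (1,0) 0 3 - C (1,0) 3 3)
      - (C (1,0) 0 4 - C (1,0) 3 4)/2 + (C (0,0) 0 5 - C (0,0) 3 5)/2 = 2 := by
    linear_combination h20
  have c4 : (C (1,0) 0 4 - C (1,0) 3 4) + (C (0,0) 0 5 - C (0,0) 3 5) = 0 :=
    cancel3 (Y := 0) (by linear_combination -h21)
  have c5 : (C (0,0) 0 0 - C (0,0) 3 0) + (C (0,0) 0 1 - C (0,0) 3 1)/2
      - (C (1,0) 0 2 - C (1,0) 3 2)/2 - (C (1,0) 0 3 - C (1,0) 3 3) + 1/3 = 2 := by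
    linear_combination h30
  have c6 : (C (0,0) 0 1 - C (0,0) 3 1) + (C (1,0) 0 2 - C (1,0) 3 2) = 0 :=
    cancel3 (Y := 0) (by linear_combination h31)
  -- energy consistency for the quadratic potential
  have hq0 := hE VQ memV_VQ 1 (1,0) hm10
  rw [Vi_VQ] at hq0
  have hVQ0 : VQ (Famat 1) = 0 := by
    show (Famat 1 0 1)^2 + (Famat 1 3 1)^2 = 0
    rw [Famat_one, Famat_one, aF0, aF3, av11, av41]
    norm_num
  rw [hVQ0] at hq0
  simp only [Fin.sum_univ_six, Famat_one, aF0, aF1, aF2, aF3, aF4, aF5,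
    av11, av21, av31, av41, av51, av61] at hq0
  have hq1 : ((C (1,0) 0 1 + C (1,0) 0 2 - C (1,0) 0 4 - C (1,0) 0 5) * (Real.sqrt 3/2))^2
      + ((C (1,0) 3 1 + C (1,0) 3 2 - C (1,0) 3 4 - C (1,0) 3 5) * (Real.sqrt 3/2))^2 = 0 := by
    linear_combination hq0
  have hA3sq : ((C (1,0) 3 1 + C (1,0) 3 2 - C (1,0) 3 4 - C (1,0) 3 5) * (Real.sqrt 3/2))^2
      = 0 := by
    nlinarith [hq1, sq_nonneg ((C (1,0) 0 1 + C (1,0) 0 2 - C (1,0) 0 4 - C (1,0) 0 5)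
        * (Real.sqrt 3/2)), sq_nonneg ((C (1,0) 3 1 + C (1,0) 3 2 - C (1,0) 3 4 - C (1,0) 3 5)
        * (Real.sqrt 3/2))]
  have a3 : C (1,0) 3 1 + C (1,0) 3 2 - C (1,0) 3 4 - C (1,0) 3 5 = 0 :=
    cancel3 (Y := 0) (by linear_combination sq_eq_zero_iff.mp hA3sq)
  linarith only [c1, c2, c3, c4, c5, c6, a3, z1, z2, z5, z7, z9, z10]
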